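/- arXiv:2201.04539 — 4 statements merged into one kernel-verified Lean document; each statement's English description precedes it below -/
import Mathlib

section
/- For every subprobability measure ν on ℝ^d there exists a nonnegative function V ∈ C²(ℝ^d) with compact sublevel sets {V ≤ c} for every c ≥ 0, uniformly bounded first and second order partial derivatives, and ∫ V dν < ∞. -/
open MeasureTheory Set Filter Real Topology

set_option maxHeartbeats 1000000

namespace LyapAux

variable {d : ℕ} (ν : Measure (EuclideanSpace ℝ (Fin d)))

noncomputable def G (r : ℝ) : ℝ := (ν {x | r ≤ ‖x‖}).toReal + Real.exp (-r)

noncomputable def g (r : ℝ) : ℝ := -Real.log (G ν r)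

noncomputable def e (r : ℝ) : ℝ := ⨅ s : ℝ, (g ν s + |r - s|)

variable {ν}
variable (hν : ν Set.univ ≤ 1)

include hν in
lemma meas_ne_top (s : Set (EuclideanSpace ℝ (Fin d))) : ν s ≠ ⊤ :=
  ((le_trans (measure_mono (subset_univ s)) hν).trans_lt (by norm_num)).ne

include hν in
lemma toReal_le_one (s : Set (EuclideanSpace ℝ (Fin d))) : (ν s).toReal ≤ 1 := by
  have h := (measure_mono (subset_univ s)).trans hν
  simpa using ENNReal.toReal_mono (by norm_num) h

lemma G_pos (r : ℝ) : 0 < G ν r :=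
  add_pos_of_nonneg_of_pos ENNReal.toReal_nonneg (Real.exp_pos _)

include hν in
lemma G_anti : Antitone (G ν) := by
  intro a b hab
  apply add_le_add
  · exact ENNReal.toReal_mono (meas_ne_top hν _)
      (measure_mono (fun x hx => le_trans hab hx))
  · exact Real.exp_le_exp.2 (by linarith)

include hν in
lemma g_mono : Monotone (g ν) := fun a b hab =>
  neg_le_neg (Real.log_le_log (G_pos b) (G_anti hν hab))

lemma g_le (r : ℝ) : g ν r ≤ r := by
  have h : Real.exp (-r) ≤ G ν r := le_add_of_nonneg_left ENNReal.toReal_nonneg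
  have := Real.log_le_log (Real.exp_pos _) h
  rw [Real.log_exp] at this
  simp only [g]; linarith

include hν in
lemma g_lb (r : ℝ) : min r 0 - Real.log 2 ≤ g ν r := by
  have h1 : G ν r ≤ 2 * Real.exp (max 0 (-r)) := by
    have h2 : (ν {x | r ≤ ‖x‖}).toReal ≤ 1 := toReal_le_one hν _
    have h3 : (1:ℝ) ≤ Real.exp (max 0 (-r)) := by
      rw [← Real.exp_zero]; exact Real.exp_le_exp.2 (le_max_left _ _)
    have h4 : Real.exp (-r) ≤ Real.exp (max 0 (-r)) := Real.exp_le_exp.2 (le_max_right _ _)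
    simp only [G]; linarith
  have h5 := Real.log_le_log (G_pos r) h1
  rw [Real.log_mul (by norm_num) (Real.exp_ne_zero _), Real.log_exp] at h5
  have h6 : min r 0 = -max 0 (-r) := by rcases le_total r 0 with h | h <;> simp [min_eq_left, *] <;> simp [max_eq_right, neg_nonneg.2 h, *] <;> linarith
  simp only [g]
  rw [h6]
  linarith

include hν in
lemma e_family_lb (r s : ℝ) : min r 0 - Real.log 2 ≤ g ν s + |r - s| := by
  have h1 := g_lb hν s
  have h2 : min r 0 ≤ min s 0 + |r - s| := by
    rcases abs_cases (r - s) with ⟨h, _⟩ | ⟨h, _⟩ <;> rcases le_total r 0 with h' | h' <;>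
      rcases le_total s 0 with h'' | h'' <;> simp [min_eq_left, min_eq_right, *] <;> linarith
  linarith

include hν in
lemma e_bddBelow (r : ℝ) : BddBelow (Set.range fun s => g ν s + |r - s|) :=
  ⟨min r 0 - Real.log 2, by rintro y ⟨s, rfl⟩; exact e_family_lb hν r s⟩

include hν in
lemma e_le_g (r : ℝ) : e ν r ≤ g ν r := by
  have := ciInf_le (e_bddBelow hν r) r
  simpa [e] using this

include hν in
lemma e_lipschitz : LipschitzWith 1 (e ν) := by
  apply LipschitzWith.of_dist_le_mul
  intro a b
  rw [Real.dist_eq, Real.dist_eq, NNReal.coe_one, one_mul]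
  have key : ∀ u v : ℝ, e ν u ≤ e ν v + |u - v| := by
    intro u v
    rw [← sub_le_iff_le_add]
    apply le_ciInf
    intro s
    have h1 : e ν u ≤ g ν s + |u - s| := ciInf_le (e_bddBelow hν u) s
    have h2 : |u - s| ≤ |u - v| + |v - s| := abs_sub_le u v s
    linarith
  rw [abs_sub_le_iff]
  constructor
  · have := key a b; have h := abs_sub_comm a b; linarith [le_abs_self (a-b)]
  · have := key b a; rw [abs_sub_comm b a] at this; linarith

include hν in
lemma tail_tendsto : Tendsto (fun n : ℕ => ν {x | (n:ℝ) ≤ ‖x‖}) atTop (𝓝 0) := by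
  have h : (⋂ n : ℕ, {x : EuclideanSpace ℝ (Fin d) | (n:ℝ) ≤ ‖x‖}) = ∅ := by
    ext x
    simp only [mem_iInter, mem_setOf_eq, mem_empty_iff_false, iff_false, not_forall, not_le]
    obtain ⟨n, hn⟩ := exists_nat_gt ‖x‖
    exact ⟨n, hn⟩
  have h2 := tendsto_measure_iInter_atTop (μ := ν)
    (fun n => (isClosed_le continuous_const continuous_norm).measurableSet.nullMeasurableSet)
    (fun m n hmn x hx => by simp only [mem_setOf_eq] at *; exact le_trans (Nat.cast_le.2 hmn) hx)
    ⟨0, ((measure_mono (subset_univ _)).trans hν).trans_lt (by norm_num) |>.ne⟩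
  rw [h] at h2
  simpa [Function.comp_def] using h2


include hν in
lemma g_tendsto : Tendsto (g ν) atTop atTop := by
  rw [tendsto_atTop]
  intro M
  set ε := Real.exp (-M) / 2 with hε
  have hεpos : 0 < ε := by positivity
  have h1 : ∀ᶠ n : ℕ in atTop, (ν {x | (n:ℝ) ≤ ‖x‖}).toReal < ε := by
    have := (ENNReal.tendsto_toReal (by norm_num : (0:ENNReal) ≠ ⊤)).comp (tail_tendsto hν)
    simp only [ENNReal.toReal_zero] at this
    exact this.eventually_lt_const hεpos
  obtain ⟨N, hN⟩ := h1.exists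
  have h2 : ∀ᶠ r : ℝ in atTop, Real.exp (-r) < ε := by
    have : Tendsto (fun r : ℝ => Real.exp (-r)) atTop (𝓝 0) := tendsto_exp_neg_atTop_nhds_zero
    exact this.eventually_lt_const hεpos
  filter_upwards [h2, eventually_ge_atTop (N:ℝ)] with r hr hNr
  have h3 : (ν {x | r ≤ ‖x‖}).toReal ≤ (ν {x | (N:ℝ) ≤ ‖x‖}).toReal :=
    ENNReal.toReal_mono (meas_ne_top hν _) (measure_mono (fun x hx => le_trans hNr hx))
  have h4 : G ν r < Real.exp (-M) := by
    simp only [G]; rw [hε] at hN hr; linarith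
  have h5 := Real.log_lt_log (G_pos r) h4
  rw [Real.log_exp] at h5
  simp only [g]; linarith

include hν in
lemma e_lb (r : ℝ) (hr : 0 ≤ r) : min (g ν (r/2)) (r/2) - Real.log 2 ≤ e ν r := by
  apply le_ciInf
  intro s
  have hl2 : (0:ℝ) < Real.log 2 := Real.log_pos one_lt_two
  rcases le_total (r/2) s with h | h
  · have h1 := g_mono hν h
    have h2 := abs_nonneg (r - s)
    have h3 := min_le_left (g ν (r/2)) (r/2)
    linarith
  · have h1 := g_lb hν s
    have h2 : r - s ≤ |r - s| := le_abs_self _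
    have h3 := min_le_right (g ν (r/2)) (r/2)
    rcases le_total s 0 with h4 | h4
    · rw [min_eq_left h4] at h1; linarith
    · rw [min_eq_right h4] at h1; linarith

include hν in
lemma e_tendsto : Tendsto (e ν) atTop atTop := by
  have hg2 : Tendsto (fun r : ℝ => g ν (r/2)) atTop atTop :=
    (g_tendsto hν).comp (tendsto_id.atTop_div_const two_pos)
  have hr2 : Tendsto (fun r : ℝ => r/2) atTop atTop :=
    tendsto_id.atTop_div_const two_pos
  rw [tendsto_atTop]
  intro M
  filter_upwards [hg2.eventually (eventually_ge_atTop (M + Real.log 2)),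
    hr2.eventually (eventually_ge_atTop (M + Real.log 2)), eventually_ge_atTop (0:ℝ)]
    with r h1 h2 h0
  have := e_lb hν r h0
  have := le_min h1 h2
  linarith

include hν in
lemma meas_G_lt {s : ℝ} (hs : 0 < s) : ν {x | G ν ‖x‖ < s} ≤ ENNReal.ofReal s := by
  set U := {r : ℝ | G ν r < s} with hU
  have key : ∀ r ∈ U, ν {x | r ≤ ‖x‖} ≤ ENNReal.ofReal s := by
    intro r hr
    have h0 := Real.exp_pos (-r)
    have h1 : (ν {x | r ≤ ‖x‖}).toReal ≤ s := by
      have : (ν {x | r ≤ ‖x‖}).toReal + Real.exp (-r) < s := hr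
      linarith
    calc ν {x | r ≤ ‖x‖} = ENNReal.ofReal (ν {x | r ≤ ‖x‖}).toReal :=
          (ENNReal.ofReal_toReal (meas_ne_top hν _)).symm
      _ ≤ ENNReal.ofReal s := ENNReal.ofReal_le_ofReal h1
  rcases eq_empty_or_nonempty U with hUe | hUne
  · have hempty : {x : EuclideanSpace ℝ (Fin d) | G ν ‖x‖ < s} = ∅ := by
      ext x; simp only [mem_setOf_eq, mem_empty_iff_false, iff_false, not_lt]
      by_contra h
      push_neg at h
      exact (eq_empty_iff_forall_notMem.1 hUe ‖x‖) h
    rw [hempty]; simp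
  · have hbdd : BddBelow U := by
      refine ⟨-Real.log s, fun r hr => ?_⟩
      have h1 : Real.exp (-r) < s := by
        have : (ν {x | r ≤ ‖x‖}).toReal + Real.exp (-r) < s := hr
        have := ENNReal.toReal_nonneg (a := ν {x | r ≤ ‖x‖})
        linarith
      have := (Real.lt_log_iff_exp_lt hs).2 h1
      linarith
    set a := sInf U with ha
    by_cases haU : a ∈ U
    · refine (measure_mono (fun x hx => ?_)).trans (key a haU)
      exact csInf_le hbdd hx
    · have hIoi : ∀ r, a < r → r ∈ U := by
        intro r hr
        obtain ⟨u, hu, hur⟩ := exists_lt_of_csInf_lt hUne hr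
        exact lt_of_le_of_lt (G_anti hν hur.le) hu
      have hsub : {x : EuclideanSpace ℝ (Fin d) | G ν ‖x‖ < s} ⊆ {x | a < ‖x‖} := by
        intro x hx
        have h1 : a ≤ ‖x‖ := csInf_le hbdd hx
        rcases h1.lt_or_eq with h | h
        · exact h
        · exact absurd (h ▸ hx) haU
      have hunion : {x : EuclideanSpace ℝ (Fin d) | a < ‖x‖} =
          ⋃ n : ℕ, {x | a + 1/(n+1) ≤ ‖x‖} := by
        ext x
        simp only [mem_setOf_eq, mem_iUnion]
        constructor
        · intro h
          obtain ⟨n, hn⟩ := exists_nat_one_div_lt (sub_pos.2 h)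
          exact ⟨n, by push_cast at hn ⊢; linarith⟩
        · rintro ⟨n, hn⟩
          have : (0:ℝ) < 1/(n+1) := by positivity
          linarith
      calc ν {x | G ν ‖x‖ < s} ≤ ν (⋃ n : ℕ, {x | a + 1/(n+1) ≤ ‖x‖}) :=
            measure_mono (hunion ▸ hsub)
        _ = ⨆ n : ℕ, ν {x | a + 1/(n+1) ≤ ‖x‖} := by
            apply Directed.measure_iUnion
            apply Monotone.directed_le
            intro m n hmn x hx
            simp only [mem_setOf_eq] at *
            have h1 : (1:ℝ)/(n+1) ≤ 1/(m+1) := by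
              apply one_div_le_one_div_of_le (by positivity)
              push_cast; exact_mod_cast add_le_add_left (Nat.cast_le.2 hmn) 1
            linarith
        _ ≤ ENNReal.ofReal s := by
            apply iSup_le
            intro n
            apply key
            apply hIoi
            have : (0:ℝ) < 1/(n+1) := by positivity
            linarith

include hν in
lemma meas_g_gt (t : ℝ) : ν {x | t < g ν ‖x‖} ≤ ENNReal.ofReal (Real.exp (-t)) := by
  have hset : {x : EuclideanSpace ℝ (Fin d) | t < g ν ‖x‖} =
      {x | G ν ‖x‖ < Real.exp (-t)} := by
    ext x
    simp only [mem_setOf_eq, g]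
    rw [lt_neg, ← Real.log_lt_iff_lt_exp (G_pos (ν := ν) _)]
  rw [hset]
  exact meas_G_lt hν (Real.exp_pos _)


open scoped Convolution ENNReal

variable (ν) in
noncomputable def W (x : EuclideanSpace ℝ (Fin d)) : ℝ := max (e ν ‖x‖) 0

noncomputable def bump (d : ℕ) : ContDiffBump (0 : EuclideanSpace ℝ (Fin d)) :=
  ⟨1, 2, one_pos, one_lt_two⟩

noncomputable def ρ (d : ℕ) : EuclideanSpace ℝ (Fin d) → ℝ := (bump d).normed volume

variable (ν) in
noncomputable def V : EuclideanSpace ℝ (Fin d) → ℝ :=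
  (ρ d) ⋆[ContinuousLinearMap.lsmul ℝ ℝ, volume] (W ν)

lemma W_nonneg (x : EuclideanSpace ℝ (Fin d)) : 0 ≤ W ν x := le_max_right _ _

include hν in
lemma W_lip : LipschitzWith 1 (W ν) := by
  apply LipschitzWith.of_dist_le_mul
  intro x y
  rw [NNReal.coe_one, one_mul, Real.dist_eq]
  have h1 := (e_lipschitz hν).dist_le_mul ‖x‖ ‖y‖
  rw [NNReal.coe_one, one_mul, Real.dist_eq] at h1
  have h2 : |‖x‖ - ‖y‖| ≤ dist x y := abs_norm_sub_norm_le x y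
  calc |W ν x - W ν y| ≤ |e ν ‖x‖ - e ν ‖y‖| := abs_max_sub_max_le_abs _ _ _
    _ ≤ dist x y := h1.trans h2

lemma ρ_nonneg (t : EuclideanSpace ℝ (Fin d)) : 0 ≤ ρ d t := (bump d).nonneg_normed t

lemma ρ_contDiff {n : ℕ∞} : ContDiff ℝ n (ρ d) := (bump d).contDiff_normed

lemma ρ_hcs : HasCompactSupport (ρ d) := (bump d).hasCompactSupport_normed

lemma ρ_integrable : Integrable (ρ d) volume := (bump d).integrable_normed

lemma ρ_integral : ∫ t, ρ d t = 1 := (bump d).integral_normed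

lemma ρ_small_support {t : EuclideanSpace ℝ (Fin d)} (h : ρ d t ≠ 0) : ‖t‖ ≤ 2 := by
  have h' : (bump d).normed volume t ≠ 0 := h
  have := Function.mem_support.2 h'
  rw [(bump d).support_normed_eq] at this
  have : dist t 0 < (bump d).rOut := Metric.mem_ball.1 this
  rw [dist_zero_right] at this
  exact le_of_lt this

include hν in
lemma W_cont : Continuous (W ν) := (W_lip hν).continuous

include hν in
lemma integrand_integrable (x : EuclideanSpace ℝ (Fin d)) :
    Integrable (fun t => ρ d t • W ν (x - t)) volume := by
  apply Continuous.integrable_of_hasCompactSupport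
  · exact ((ρ_contDiff (n := 0)).continuous).smul ((W_cont hν).comp (continuous_const.sub continuous_id))
  · exact ρ_hcs.smul_right

include hν in
lemma V_eq (x : EuclideanSpace ℝ (Fin d)) : V ν x = ∫ t, ρ d t • W ν (x - t) := by
  simp only [V, convolution_def, ContinuousLinearMap.lsmul_apply]

include hν in
lemma V_nonneg (x : EuclideanSpace ℝ (Fin d)) : 0 ≤ V ν x := by
  rw [V_eq hν]
  exact integral_nonneg fun t => smul_nonneg (ρ_nonneg t) (W_nonneg _)

include hν in
lemma V_le (x : EuclideanSpace ℝ (Fin d)) : V ν x ≤ W ν x + 2 := by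
  rw [V_eq hν]
  have h1 : ∀ t, ρ d t • W ν (x - t) ≤ ρ d t • (W ν x + 2) := by
    intro t
    by_cases h : ρ d t = 0
    · simp [h]
    · have ht : ‖t‖ ≤ 2 := ρ_small_support h
      have h2 : W ν (x - t) ≤ W ν x + ‖t‖ := by
        have := (W_lip hν).dist_le_mul (x - t) x
        rw [NNReal.coe_one, one_mul, Real.dist_eq, dist_eq_norm, sub_sub_cancel_left, norm_neg] at this
        have := abs_le.1 this
        linarith [this.2]
      exact smul_le_smul_of_nonneg_left (by linarith) (ρ_nonneg t)
  calc (∫ t, ρ d t • W ν (x - t)) ≤ ∫ t, ρ d t • (W ν x + 2) :=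
        integral_mono (integrand_integrable hν x) (ρ_integrable.smul_const _) h1
    _ = W ν x + 2 := by rw [integral_smul_const, ρ_integral, one_smul]

include hν in
lemma V_ge (x : EuclideanSpace ℝ (Fin d)) : W ν x - 2 ≤ V ν x := by
  rw [V_eq hν]
  have h1 : ∀ t, ρ d t • (W ν x - 2) ≤ ρ d t • W ν (x - t) := by
    intro t
    by_cases h : ρ d t = 0
    · simp [h]
    · have ht : ‖t‖ ≤ 2 := ρ_small_support h
      have h2 : W ν x - ‖t‖ ≤ W ν (x - t) := by
        have := (W_lip hν).dist_le_mul (x - t) x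
        rw [NNReal.coe_one, one_mul, Real.dist_eq, dist_eq_norm, sub_sub_cancel_left, norm_neg] at this
        have := abs_le.1 this
        linarith [this.1]
      exact smul_le_smul_of_nonneg_left (by linarith) (ρ_nonneg t)
  calc W ν x - 2 = ∫ t, ρ d t • (W ν x - 2) := by rw [integral_smul_const, ρ_integral, one_smul]
    _ ≤ ∫ t, ρ d t • W ν (x - t) :=
        integral_mono (ρ_integrable.smul_const _) (integrand_integrable hν x) h1

include hν in
lemma V_lip : LipschitzWith 1 (V ν) := by
  apply LipschitzWith.of_dist_le_mul
  intro x y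
  rw [NNReal.coe_one, one_mul, Real.dist_eq, V_eq hν, V_eq hν]
  rw [← integral_sub (integrand_integrable hν x) (integrand_integrable hν y)]
  have heq : ∀ t, ρ d t • W ν (x - t) - ρ d t • W ν (y - t)
      = ρ d t • (W ν (x - t) - W ν (y - t)) := fun t => (smul_sub _ _ _).symm
  simp_rw [heq]
  have h1 : ∀ t, ‖ρ d t • (W ν (x - t) - W ν (y - t))‖ ≤ ρ d t * dist x y := by
    intro t
    rw [norm_smul, Real.norm_eq_abs, Real.norm_eq_abs, abs_of_nonneg (ρ_nonneg t)]
    apply mul_le_mul_of_nonneg_left _ (ρ_nonneg t)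
    have := (W_lip hν).dist_le_mul (x - t) (y - t)
    rw [NNReal.coe_one, one_mul, Real.dist_eq] at this
    simpa [dist_eq_norm, sub_sub_sub_cancel_right] using this
  calc ‖∫ t, ρ d t • (W ν (x - t) - W ν (y - t))‖ ≤ ∫ t, ρ d t * dist x y :=
        norm_integral_le_of_norm_le (ρ_integrable.mul_const _) (ae_of_all _ h1)
    _ = dist x y := by rw [integral_mul_const, ρ_integral, one_mul]

include hν in
lemma V_contDiff : ContDiff ℝ 2 (V ν) :=
  HasCompactSupport.contDiff_convolution_left _ ρ_hcs ρ_contDiff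
    ((W_cont hν).locallyIntegrable)


noncomputable def Dρ (d : ℕ) : EuclideanSpace ℝ (Fin d) → (EuclideanSpace ℝ (Fin d) →L[ℝ] ℝ) :=
  fderiv ℝ (ρ d)

lemma Dρ_cont : Continuous (Dρ d) := (ρ_contDiff (n := 1)).continuous_fderiv (by simp)

lemma Dρ_hcs : HasCompactSupport (Dρ d) := ρ_hcs.fderiv ℝ

lemma Dρ_integrable : Integrable (Dρ d) volume :=
  Dρ_cont.integrable_of_hasCompactSupport Dρ_hcs

noncomputable def CC (d : ℕ) : ℝ := ∫ t, ‖Dρ d t‖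

variable (ν) in
noncomputable def F (x : EuclideanSpace ℝ (Fin d)) : EuclideanSpace ℝ (Fin d) →L[ℝ] ℝ :=
  ∫ t, W ν (x - t) • Dρ d t

lemma precompL_eq (T : EuclideanSpace ℝ (Fin d) →L[ℝ] ℝ) (w : ℝ) :
    ((ContinuousLinearMap.lsmul ℝ ℝ).precompL (EuclideanSpace ℝ (Fin d))) T w = w • T := by
  ext v
  simp [ContinuousLinearMap.precompL_apply, mul_comm]

set_option maxHeartbeats 1000000 in
include hν in
lemma V_hasFDeriv (x : EuclideanSpace ℝ (Fin d)) : HasFDerivAt (V ν) (F ν x) x := by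
  have h := HasCompactSupport.hasFDerivAt_convolution_left (μ := volume)
    (ContinuousLinearMap.lsmul ℝ ℝ) ρ_hcs (ρ_contDiff (n := 1))
    ((W_cont hν).locallyIntegrable) x
  have heq : ((fderiv ℝ (ρ d)) ⋆[(ContinuousLinearMap.lsmul ℝ ℝ).precompL
      (EuclideanSpace ℝ (Fin d)), volume] (W ν)) x = F ν x := by
    rw [convolution_def, F]
    congr 1
    funext t
    rw [precompL_eq, Dρ]
  rw [heq] at h
  exact h

include hν in
lemma fderiv_V : fderiv ℝ (V ν) = F ν := funext fun x => (V_hasFDeriv hν x).fderiv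

include hν in
lemma F_integrand_integrable (x : EuclideanSpace ℝ (Fin d)) :
    Integrable (fun t => W ν (x - t) • Dρ d t) volume := by
  apply Continuous.integrable_of_hasCompactSupport
  · exact ((W_cont hν).comp (continuous_const.sub continuous_id)).smul Dρ_cont
  · apply Dρ_hcs.mono
    intro t ht
    simp only [Function.mem_support] at ht ⊢
    intro h0
    exact ht (by rw [h0, smul_zero])

include hν in
lemma F_lip : LipschitzWith (CC d).toNNReal (F ν) := by
  apply LipschitzWith.of_dist_le_mul
  intro x y
  have hCC : (0:ℝ) ≤ CC d := integral_nonneg (fun t => norm_nonneg _)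
  rw [Real.coe_toNNReal _ hCC, dist_eq_norm]
  show ‖(∫ t, W ν (x - t) • Dρ d t) - ∫ t, W ν (y - t) • Dρ d t‖ ≤ CC d * dist x y
  rw [← integral_sub (F_integrand_integrable hν x) (F_integrand_integrable hν y)]
  have heq : ∀ t, W ν (x - t) • Dρ d t - W ν (y - t) • Dρ d t
      = (W ν (x - t) - W ν (y - t)) • Dρ d t := fun t => (sub_smul _ _ _).symm
  simp_rw [heq]
  have h1 : ∀ t, ‖(W ν (x - t) - W ν (y - t)) • Dρ d t‖ ≤ dist x y * ‖Dρ d t‖ := by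
    intro t
    have hns := norm_smul (W ν (x - t) - W ν (y - t)) (Dρ d t)
    rw [hns, Real.norm_eq_abs]
    apply mul_le_mul_of_nonneg_right _ (norm_nonneg _)
    have := (W_lip hν).dist_le_mul (x - t) (y - t)
    rw [NNReal.coe_one, one_mul, Real.dist_eq] at this
    simpa [dist_eq_norm, sub_sub_sub_cancel_right] using this
  calc ‖∫ t, (W ν (x - t) - W ν (y - t)) • Dρ d t‖ ≤ ∫ t, dist x y * ‖Dρ d t‖ :=
        norm_integral_le_of_norm_le (Dρ_integrable.norm.const_mul _) (ae_of_all _ h1)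
    _ = CC d * dist x y := by rw [integral_const_mul, CC, mul_comm]

include hν in
lemma fderiv_V_bound (x : EuclideanSpace ℝ (Fin d)) : ‖fderiv ℝ (V ν) x‖ ≤ 1 := by
  have := norm_fderiv_le_of_lipschitz ℝ (V_lip hν) (x₀ := x)
  simpa using this

include hν in
lemma fderiv2_V_bound (x : EuclideanSpace ℝ (Fin d)) :
    ‖fderiv ℝ (fderiv ℝ (V ν)) x‖ ≤ max (CC d) 0 := by
  rw [fderiv_V hν]
  have := norm_fderiv_le_of_lipschitz ℝ (F_lip hν) (x₀ := x)
  exact this.trans (Real.coe_toNNReal' _).le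


include hν in
lemma V_integrable : Integrable (V ν) ν := by
  set f₀ : EuclideanSpace ℝ (Fin d) → ℝ := fun x => max (g ν ‖x‖) 0 with hf₀
  have hf₀_meas : AEMeasurable f₀ ν :=
    (((g_mono hν).measurable.comp measurable_norm).max measurable_const).aemeasurable
  have hlayer := lintegral_eq_lintegral_meas_lt ν (f := f₀)
    (ae_of_all _ fun x => le_max_right _ _) hf₀_meas
  have hexp : IntegrableOn (fun t : ℝ => Real.exp (-t)) (Ioi 0) := by
    have := exp_neg_integrableOn_Ioi 0 (by norm_num : (0:ℝ) < 1)
    simpa using this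
  have hfin0 : ∫⁻ t in Ioi 0, ENNReal.ofReal (Real.exp (-t)) ≠ ⊤ := by
    rw [← ofReal_integral_eq_lintegral_ofReal hexp (ae_of_all _ fun t => (Real.exp_pos _).le)]
    exact ENNReal.ofReal_ne_top
  have hbound : ∫⁻ t in Ioi 0, ν {a | t < f₀ a} ≤ ∫⁻ t in Ioi 0, ENNReal.ofReal (Real.exp (-t)) := by
    apply lintegral_mono
    intro t
    rcases le_or_gt t 0 with ht | ht
    · show ν {a | t < f₀ a} ≤ ENNReal.ofReal (Real.exp (-t))
      calc ν {a | t < f₀ a} ≤ ν univ := measure_mono (subset_univ _)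
        _ ≤ 1 := hν
        _ ≤ ENNReal.ofReal (Real.exp (-t)) := by
            rw [← ENNReal.ofReal_one]
            apply ENNReal.ofReal_le_ofReal
            rw [← Real.exp_zero]
            exact Real.exp_le_exp.2 (by linarith)
    · have hset : {a : EuclideanSpace ℝ (Fin d) | t < f₀ a} = {a | t < g ν ‖a‖} := by
        ext a
        simp only [hf₀, mem_setOf_eq, lt_max_iff]
        constructor
        · rintro (h | h)
          · exact h
          · linarith
        · exact fun h => Or.inl h
      show ν {a | t < f₀ a} ≤ ENNReal.ofReal (Real.exp (-t))
      rw [hset]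
      exact meas_g_gt hν t
  have hfinf₀ : ∫⁻ x, ENNReal.ofReal (f₀ x) ∂ν ≠ ⊤ := by
    rw [hlayer]
    exact (lt_of_le_of_lt hbound hfin0.lt_top).ne
  constructor
  · exact ((V_contDiff hν).continuous).aestronglyMeasurable
  · rw [hasFiniteIntegral_iff_ofReal (ae_of_all _ (V_nonneg hν))]
    have hpt : ∀ x, ENNReal.ofReal (V ν x) ≤ ENNReal.ofReal (f₀ x) + ENNReal.ofReal 2 := by
      intro x
      rw [← ENNReal.ofReal_add (le_max_right _ _) (by norm_num)]
      apply ENNReal.ofReal_le_ofReal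
      have h1 := V_le hν x
      have h2 : W ν x ≤ f₀ x := max_le_max (e_le_g hν ‖x‖) le_rfl
      linarith
    calc ∫⁻ x, ENNReal.ofReal (V ν x) ∂ν
        ≤ ∫⁻ x, (ENNReal.ofReal (f₀ x) + ENNReal.ofReal 2) ∂ν := lintegral_mono hpt
      _ = (∫⁻ x, ENNReal.ofReal (f₀ x) ∂ν) + ENNReal.ofReal 2 * ν univ := by
          rw [lintegral_add_right _ measurable_const, lintegral_const]
      _ < ⊤ := by
          refine ENNReal.add_lt_top.2 ⟨hfinf₀.lt_top, ?_⟩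
          calc ENNReal.ofReal 2 * ν univ ≤ ENNReal.ofReal 2 * 1 := mul_le_mul_right hν _
            _ < ⊤ := by simp

include hν in
lemma V_sublevel_compact (c : ℝ) :
    IsCompact {x : EuclideanSpace ℝ (Fin d) | V ν x ≤ c} := by
  obtain ⟨R, hR⟩ := eventually_atTop.1 ((e_tendsto hν).eventually_ge_atTop (c + 3))
  apply IsCompact.of_isClosed_subset (isCompact_closedBall (0 : EuclideanSpace ℝ (Fin d)) R)
  · exact isClosed_le (V_contDiff hν).continuous continuous_const
  · intro x hx
    simp only [mem_setOf_eq] at hx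
    rw [Metric.mem_closedBall, dist_zero_right]
    by_contra h
    push_neg at h
    have h1 : c + 3 ≤ e ν ‖x‖ := hR ‖x‖ h.le
    have h2 : e ν ‖x‖ ≤ W ν x := le_max_left _ _
    have h3 := V_ge hν x
    linarith

end LyapAux

open LyapAux in
/-- For every subprobability measure `ν` on `ℝ^d` there is a nonnegative `C²` function `V`
with compact sublevel sets, uniformly bounded first and second order derivatives, and
`∫ V dν < ∞`. -/
theorem exists_lyapunov_function (d : ℕ)
    (ν : Measure (EuclideanSpace ℝ (Fin d))) (hν : ν Set.univ ≤ 1) :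
    ∃ V : EuclideanSpace ℝ (Fin d) → ℝ,
      (∀ x, 0 ≤ V x) ∧ ContDiff ℝ 2 V ∧
      (∀ c : ℝ, 0 ≤ c → IsCompact {x | V x ≤ c}) ∧
      (∃ C : ℝ, ∀ x, ‖fderiv ℝ V x‖ ≤ C ∧ ‖fderiv ℝ (fderiv ℝ V) x‖ ≤ C) ∧
      Integrable V ν := by
  refine ⟨LyapAux.V ν, V_nonneg hν, V_contDiff hν, fun c _ => V_sublevel_compact hν c,
    ⟨max 1 (max (CC d) 0), fun x => ⟨?_, ?_⟩⟩, V_integrable hν⟩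
  · exact (fderiv_V_bound hν x).trans (le_max_left _ _)
  · exact (fderiv2_V_bound hν x).trans (le_max_right _ _)
end

section
/- Let f : X → ℝ be upper semicontinuous on a separable metric space X. Then the map K ↦ sup_{x∈K} f(x) from the space comp(X) of nonempty compact subsets of X with the Hausdorff metric to ℝ, and the map K ↦ {x ∈ K : f(x) = sup_{y∈K} f(y)} from comp(X) to comp(X), are both Borel measurable. -/
open Set Metric EMetric TopologicalSpace MeasureTheory
open scoped ENNReal NNReal

namespace MeasurableSupArgmaxAux

variable {X : Type*} [MetricSpace X]


variable {X : Type*} [MetricSpace X]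

/-- An upper semicontinuous function attains its maximum on a nonempty compact set. -/
theorem usc_exists_max {f : X → ℝ} (hf : UpperSemicontinuous f) {s : Set X}
    (hs : IsCompact s) (hne : s.Nonempty) : ∃ x ∈ s, ∀ y ∈ s, f y ≤ f x := by
  have hcl : ∀ a : ℝ, IsClosed {x : X | a ≤ f x} := by
    intro a
    have h := (upperSemicontinuous_iff_isOpen_preimage.1 hf) a
    have : {x : X | a ≤ f x} = (f ⁻¹' Iio a)ᶜ := by
      ext x; simp [not_lt]
    rw [this]
    exact h.isClosed_compl
  have key := hs.inter_iInter_nonempty (fun y : s => {x : X | f y.1 ≤ f x})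
    (fun y => hcl _) ?_
  · obtain ⟨x, hxs, hx⟩ := key
    rw [mem_iInter] at hx
    exact ⟨x, hxs, fun y hy => hx ⟨y, hy⟩⟩
  · intro u
    rcases u.eq_empty_or_nonempty with rfl | hu
    · simpa using hne
    · obtain ⟨y₀, hy₀, hmax⟩ := u.exists_max_image (fun y : s => f y.1) hu
      refine ⟨y₀.1, y₀.2, ?_⟩
      rw [mem_iInter₂]
      intro y hy
      exact hmax y hy



variable {X : Type*} [MetricSpace X]

theorem usc_isGreatest {f : X → ℝ} (hf : UpperSemicontinuous f) {s : Set X}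
    (hs : IsCompact s) (hne : s.Nonempty) :
    ∃ x ∈ s, f x = sSup (f '' s) ∧ ∀ y ∈ s, f y ≤ f x := by
  obtain ⟨x, hxs, hx⟩ := usc_exists_max hf hs hne
  refine ⟨x, hxs, ?_, hx⟩
  have : IsGreatest (f '' s) (f x) :=
    ⟨mem_image_of_mem f hxs, by rintro _ ⟨y, hy, rfl⟩; exact hx y hy⟩
  exact (this.csSup_eq).symm

/-- `{K | K ⊆ V}` is open in the Hausdorff metric, for `V` open. -/
theorem isOpen_subsets {V : Set X} (hV : IsOpen V) :
    IsOpen {K : NonemptyCompacts X | (K : Set X) ⊆ V} := by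
  rw [Metric.isOpen_iff]
  intro K hK
  obtain ⟨δ, δpos, hδ⟩ := K.isCompact.exists_thickening_subset_open hV hK
  refine ⟨δ, δpos, fun K' hK' => ?_⟩
  intro x hx
  apply hδ
  rw [Metric.mem_thickening_iff_infEdist_lt]
  have h1 : infEdist x (K : Set X) ≤ hausdorffEdist (K' : Set X) (K : Set X) :=
    infEdist_le_hausdorffEdist_of_mem hx
  have h2 : hausdorffEdist (K' : Set X) (K : Set X) < ENNReal.ofReal δ := by
    have : edist K' K < ENNReal.ofReal δ := edist_lt_ofReal.2 (mem_ball.1 hK')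
    exact this
  exact lt_of_le_of_lt h1 h2

/-- `{K | K ∩ U ≠ ∅}` is open in the Hausdorff metric, for `U` open. -/
theorem isOpen_hits {U : Set X} (hU : IsOpen U) :
    IsOpen {K : NonemptyCompacts X | ((K : Set X) ∩ U).Nonempty} := by
  rw [EMetric.isOpen_iff]
  rintro K ⟨x, hxK, hxU⟩
  obtain ⟨ε, εpos, hε⟩ := EMetric.isOpen_iff.1 hU x hxU
  refine ⟨ε, εpos, fun K' hK' => ?_⟩
  have hlt : hausdorffEdist (K : Set X) (K' : Set X) < ε := by
    show edist K K' < ε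
    rw [edist_comm]
    exact EMetric.mem_ball.1 hK'
  obtain ⟨y, hyK', hy⟩ := exists_edist_lt_of_hausdorffEdist_lt hxK hlt
  exact ⟨y, hyK', hε (by rwa [EMetric.mem_ball, edist_comm])⟩

/-- Hitting a closed set is a Borel condition. -/
theorem measurableSet_hits_closed {C : Set X} (hC : IsClosed C) :
    MeasurableSet[borel (NonemptyCompacts X)]
      {K : NonemptyCompacts X | ((K : Set X) ∩ C).Nonempty} := by
  borelize (NonemptyCompacts X)
  have key : {K : NonemptyCompacts X | ((K : Set X) ∩ C).Nonempty}
      = ⋂ n : ℕ, {K : NonemptyCompacts X |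
          ((K : Set X) ∩ {x | infEdist x C < ((n : ℝ≥0∞) + 1)⁻¹}).Nonempty} := by
    ext K
    simp only [mem_iInter, mem_setOf_eq]
    constructor
    · rintro ⟨x, hxK, hxC⟩ n
      refine ⟨x, hxK, ?_⟩
      have : infEdist x C = 0 := infEdist_zero_of_mem hxC
      rw [mem_setOf_eq, this]
      simp
    · intro h
      obtain ⟨x₀, hx₀K, hx₀⟩ := K.isCompact.exists_isMinOn K.nonempty
        (continuous_infEdist (s := C)).continuousOn
      have hzero : infEdist x₀ C = 0 := by
        by_contra hne
        obtain ⟨n, hn⟩ := ENNReal.exists_inv_nat_lt hne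
        obtain ⟨x, hxK, hx⟩ := h n
        have h1 : infEdist x₀ C ≤ infEdist x C := hx₀ hxK
        have h2 : ((n : ℝ≥0∞) + 1)⁻¹ ≤ ((n : ℝ≥0∞))⁻¹ :=
          ENNReal.inv_le_inv.mpr (by simp)
        exact absurd (h1.trans_lt (hx.trans_le h2)) (not_lt.mpr hn.le)
      have : x₀ ∈ closure C := EMetric.mem_closure_iff_infEdist_zero.2 hzero
      exact ⟨x₀, hx₀K, hC.closure_eq ▸ this⟩
  rw [key]
  exact MeasurableSet.iInter fun n =>
    (isOpen_hits (isOpen_lt continuous_infEdist continuous_const)).measurableSet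



section
variable [SecondCountableTopology X]

theorem measurable_of_subsets_hits {α : Type*} [MeasurableSpace α]
    (G : α → NonemptyCompacts X)
    (h1 : ∀ V : Set X, IsOpen V → MeasurableSet {a | (G a : Set X) ⊆ V})
    (h2 : ∀ U : Set X, IsOpen U → MeasurableSet {a | ((G a : Set X) ∩ U).Nonempty}) :
    @Measurable α (NonemptyCompacts X) _ (borel _) G := by
  have hball : ∀ (C : NonemptyCompacts X) (ε : ℝ),
      MeasurableSet {a | dist (G a) C < ε} := by
    intro C ε
    set r : ℝ≥0∞ := ENNReal.ofReal ε with hr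
    obtain ⟨Dc, hDcsub, hDccount, hDcdense⟩ :
        ∃ Dc ⊆ (C : Set X), Dc.Countable ∧ (C : Set X) ⊆ closure Dc := by
      obtain ⟨s, hscount, hsdense⟩ := TopologicalSpace.exists_countable_dense (C : Set X)
      refine ⟨Subtype.val '' s, Subtype.coe_image_subset _ _, hscount.image _, ?_⟩
      intro y hy
      have hmem : (⟨y, hy⟩ : (C : Set X)) ∈ closure s := by
        rw [hsdense.closure_eq]; trivial
      exact map_mem_closure continuous_subtype_val hmem fun x hx => mem_image_of_mem _ hx
    have hchar : ∀ a, dist (G a) C < ε ↔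
        ((G a : Set X) ⊆ {x | infEdist x (C : Set X) < r} ∧
         ∀ y ∈ (C : Set X), infEdist y (G a : Set X) < r) := by
      intro a
      constructor
      · intro h
        have hh : hausdorffEdist (G a : Set X) (C : Set X) < r := by
          show edist (G a) C < r
          exact edist_lt_ofReal.2 h
        refine ⟨fun x hx => lt_of_le_of_lt (infEdist_le_hausdorffEdist_of_mem hx) hh,
          fun y hy => ?_⟩
        rw [hausdorffEdist, hausdorffEDist_comm] at hh
        exact lt_of_le_of_lt (infEdist_le_hausdorffEdist_of_mem hy) hh
      · rintro ⟨hs, ht⟩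
        have h1' : hausdorffEdist (G a : Set X) (C : Set X) < r := by
          rw [hausdorffEdist, hausdorffEDist_def]
          refine sup_lt_iff.2 ⟨?_, ?_⟩
          · obtain ⟨x₀, hx₀, hmax⟩ := (G a).isCompact.exists_isMaxOn (G a).nonempty
              (continuous_infEdist (s := (C : Set X))).continuousOn
            exact lt_of_le_of_lt (iSup₂_le fun x hx => hmax hx) (hs hx₀)
          · obtain ⟨y₀, hy₀, hmax⟩ := C.isCompact.exists_isMaxOn C.nonempty
              (continuous_infEdist (s := ((G a : Set X)))).continuousOn
            exact lt_of_le_of_lt (iSup₂_le fun y hy => hmax hy) (ht y₀ hy₀)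
        have : edist (G a) C < ENNReal.ofReal ε := h1'
        exact edist_lt_ofReal.1 this
    have hchar2 : ∀ a, (∀ y ∈ (C : Set X), infEdist y (G a : Set X) < r) ↔
        ∃ q : ℚ, (Real.toNNReal q : ℝ≥0∞) < r ∧
          ∀ d ∈ Dc, ∀ n : ℕ,
            infEdist d (G a : Set X) < (Real.toNNReal q : ℝ≥0∞) + ((n : ℝ≥0∞) + 1)⁻¹ := by
      intro a
      constructor
      · intro h
        obtain ⟨y₀, hy₀, hmax⟩ := C.isCompact.exists_isMaxOn C.nonempty
          (continuous_infEdist (s := ((G a : Set X)))).continuousOn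
        obtain ⟨q, _, hq1, hq2⟩ := ENNReal.lt_iff_exists_rat_btwn.1 (h y₀ hy₀)
        refine ⟨q, hq2, fun d hd n => ?_⟩
        have hd' : infEdist d (G a : Set X) ≤ infEdist y₀ (G a : Set X) := hmax (hDcsub hd)
        calc infEdist d (G a : Set X) ≤ (Real.toNNReal q : ℝ≥0∞) := hd'.trans hq1.le
          _ < _ := ENNReal.lt_add_right ENNReal.coe_ne_top (ENNReal.inv_ne_zero.2 (by simp))
      · rintro ⟨q, hq, hqd⟩
        have hle : ∀ d ∈ Dc, infEdist d (G a : Set X) ≤ (Real.toNNReal q : ℝ≥0∞) := by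
          intro d hd
          refine ENNReal.le_of_forall_pos_le_add fun δ δpos _ => ?_
          obtain ⟨n, hn⟩ := ENNReal.exists_inv_nat_lt
            (show ((δ : ℝ≥0∞)) ≠ 0 from ENNReal.coe_ne_zero.2 δpos.ne')
          have h1n : ((n : ℝ≥0∞) + 1)⁻¹ ≤ ((n : ℝ≥0∞))⁻¹ :=
            ENNReal.inv_le_inv.mpr (by simp)
          calc infEdist d (G a : Set X)
              ≤ (Real.toNNReal q : ℝ≥0∞) + ((n : ℝ≥0∞) + 1)⁻¹ := (hqd d hd n).le
            _ ≤ (Real.toNNReal q : ℝ≥0∞) + δ := add_le_add_right (h1n.trans hn.le) _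
        intro y hy
        have hcl : IsClosed {z : X | infEdist z (G a : Set X) ≤ (Real.toNNReal q : ℝ≥0∞)} :=
          isClosed_le continuous_infEdist continuous_const
        have : y ∈ {z : X | infEdist z (G a : Set X) ≤ (Real.toNNReal q : ℝ≥0∞)} :=
          closure_minimal hle hcl (hDcdense hy)
        exact lt_of_le_of_lt this hq
    have hiff : ∀ a (d : X) (t : ℝ≥0∞),
        ((G a : Set X) ∩ EMetric.ball d t).Nonempty ↔ infEdist d (G a : Set X) < t := by
      intro a d t
      rw [infEdist, infEDist_lt_iff]
      constructor
      · rintro ⟨y, hyG, hyb⟩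
        exact ⟨y, hyG, by rw [edist_comm]; exact EMetric.mem_ball.1 hyb⟩
      · rintro ⟨y, hyG, hy⟩
        exact ⟨y, hyG, EMetric.mem_ball.2 (by rwa [edist_comm])⟩
    have hset : {a | dist (G a) C < ε} =
        {a | (G a : Set X) ⊆ {x | infEdist x (C : Set X) < r}} ∩
        ⋃ q : ℚ, ⋃ (_ : (Real.toNNReal q : ℝ≥0∞) < r),
          ⋂ d ∈ Dc, ⋂ n : ℕ,
            {a | ((G a : Set X) ∩
              EMetric.ball d ((Real.toNNReal q : ℝ≥0∞) + ((n : ℝ≥0∞) + 1)⁻¹)).Nonempty} := by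
      ext a
      simp only [mem_inter_iff, mem_setOf_eq, mem_iUnion, mem_iInter, hiff a]
      rw [hchar a, hchar2 a]
      tauto
    rw [hset]
    refine (h1 _ (isOpen_lt continuous_infEdist continuous_const)).inter ?_
    refine MeasurableSet.iUnion fun q => MeasurableSet.iUnion fun _ => ?_
    exact MeasurableSet.biInter hDccount fun d _ =>
      MeasurableSet.iInter fun n => h2 _ EMetric.isOpen_ball
  -- now reduce measurability to open sets, and open sets to balls
  refine measurable_generateFrom ?_
  intro W hW
  rw [mem_setOf_eq] at hW
  obtain ⟨T, hTcount, hTdense⟩ := TopologicalSpace.exists_countable_dense (NonemptyCompacts X)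
  classical
  have hWeq : W = ⋃ p ∈ {p : NonemptyCompacts X × ℚ |
      p.1 ∈ T ∧ Metric.ball p.1 (p.2 : ℝ) ⊆ W}, Metric.ball p.1 (p.2 : ℝ) := by
    ext K
    simp only [mem_iUnion, mem_setOf_eq]
    constructor
    · intro hK
      obtain ⟨ε, εpos, hε⟩ := Metric.isOpen_iff.1 hW K hK
      obtain ⟨C, hCT, hCd⟩ : ∃ C ∈ T, dist C K < ε / 4 := by
        have := Metric.dense_iff.1 hTdense K (ε / 4) (by linarith)
        obtain ⟨C, hC1, hC2⟩ := this
        exact ⟨C, hC2, Metric.mem_ball.1 hC1⟩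
      obtain ⟨q, hq1, hq2⟩ := exists_rat_btwn (show ε / 4 < ε / 2 by linarith)
      refine ⟨(C, q), ⟨hCT, ?_⟩, ?_⟩
      · intro L hL
        apply hε
        rw [Metric.mem_ball] at hL ⊢
        have : dist L K ≤ dist L C + dist C K := dist_triangle _ _ _
        linarith
      · rw [Metric.mem_ball]
        rw [dist_comm] at hCd
        linarith
    · rintro ⟨p, ⟨_, hsub⟩, hKp⟩
      exact hsub hKp
  rw [hWeq]
  rw [preimage_iUnion₂]
  refine MeasurableSet.biUnion ((hTcount.prod (Set.countable_univ)).mono ?_) fun p _ => ?_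
  · rintro ⟨C, q⟩ ⟨hC, _⟩
    exact ⟨hC, trivial⟩
  · exact hball p.1 p.2


end


variable {X : Type*} [MetricSpace X]

/-- the set of maximizers -/
def S (f : X → ℝ) (K : NonemptyCompacts X) : Set X :=
  {x ∈ (K : Set X) | f x = sSup (f '' (K : Set X))}

theorem le_sup {f : X → ℝ} (hf : UpperSemicontinuous f) (K : NonemptyCompacts X)
    {x : X} (hx : x ∈ (K : Set X)) : f x ≤ sSup (f '' (K : Set X)) := by
  obtain ⟨x₀, hx₀, he, hmax⟩ := usc_isGreatest hf K.isCompact K.nonempty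
  rw [← he]; exact hmax x hx

theorem S_eq {f : X → ℝ} (hf : UpperSemicontinuous f) (K : NonemptyCompacts X) :
    S f K = (K : Set X) ∩ {x | sSup (f '' (K : Set X)) ≤ f x} := by
  ext x
  simp only [S, mem_inter_iff, mem_setOf_eq]
  exact ⟨fun ⟨h1, h2⟩ => ⟨h1, h2.ge⟩, fun ⟨h1, h2⟩ => ⟨h1, le_antisymm (le_sup hf K h1) h2⟩⟩

theorem isClosed_ge (f : X → ℝ) (hf : UpperSemicontinuous f) (a : ℝ) :
    IsClosed {x : X | a ≤ f x} := by
  have h := (upperSemicontinuous_iff_isOpen_preimage.1 hf) a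
  have : {x : X | a ≤ f x} = (f ⁻¹' Iio a)ᶜ := by ext x; simp [not_lt]
  rw [this]; exact h.isClosed_compl

theorem S_isCompact {f : X → ℝ} (hf : UpperSemicontinuous f) (K : NonemptyCompacts X) :
    IsCompact (S f K) := by
  rw [S_eq hf]
  exact K.isCompact.inter_right (isClosed_ge f hf _)

theorem S_nonempty {f : X → ℝ} (hf : UpperSemicontinuous f) (K : NonemptyCompacts X) :
    (S f K).Nonempty := by
  obtain ⟨x₀, hx₀, he, _⟩ := usc_isGreatest hf K.isCompact K.nonempty
  exact ⟨x₀, hx₀, he⟩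

/-- The maximizer set hitting a closed set is a Borel condition. -/
theorem measurableSet_S_hits_closed {f : X → ℝ} (hf : UpperSemicontinuous f)
    {C : Set X} (hC : IsClosed C) :
    MeasurableSet[borel (NonemptyCompacts X)]
      {K : NonemptyCompacts X | (S f K ∩ C).Nonempty} := by
  borelize (NonemptyCompacts X)
  have key : {K : NonemptyCompacts X | (S f K ∩ C).Nonempty} =
      {K : NonemptyCompacts X | ((K : Set X) ∩ C).Nonempty} ∩
      (⋃ q : ℚ, {K : NonemptyCompacts X | (K : Set X) ⊆ f ⁻¹' (Iio (q : ℝ)) ∪ Cᶜ} ∩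
        {K : NonemptyCompacts X | (K : Set X) ⊆ f ⁻¹' (Iio (q : ℝ))}ᶜ)ᶜ := by
    ext K
    simp only [mem_inter_iff, mem_setOf_eq, mem_compl_iff, mem_iUnion, not_exists,
      not_and, not_not]
    constructor
    · rintro ⟨x, ⟨hxK, hxm⟩, hxC⟩
      refine ⟨⟨x, hxK, hxC⟩, fun q hq => ?_⟩
      intro y hy
      have hxq : f x < (q : ℝ) := by
        have := hq hxK
        rcases this with h | h
        · exact h
        · exact absurd hxC h
      have : f y ≤ f x := hxm ▸ le_sup hf K hy
      exact lt_of_le_of_lt this hxq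
    · rintro ⟨hKC, hq⟩
      have hKCcompact : IsCompact ((K : Set X) ∩ C) :=
        K.isCompact.inter_right hC
      obtain ⟨x, hx, hxe, hxmax⟩ := usc_isGreatest hf hKCcompact hKC
      refine ⟨x, ⟨hx.1, ?_⟩, hx.2⟩
      by_contra hne
      have hlt : f x < sSup (f '' (K : Set X)) :=
        lt_of_le_of_ne (le_sup hf K hx.1) hne
      obtain ⟨q, hq1, hq2⟩ := exists_rat_btwn hlt
      have hsub : (K : Set X) ⊆ f ⁻¹' (Iio (q : ℝ)) ∪ Cᶜ := by
        intro y hy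
        by_cases hyC : y ∈ C
        · left
          exact lt_of_le_of_lt (hxmax y ⟨hy, hyC⟩) hq1
        · right; exact hyC
      have := hq q hsub
      obtain ⟨x₀, hx₀, he, _⟩ := usc_isGreatest hf K.isCompact K.nonempty
      have : f x₀ < (q : ℝ) := this hx₀
      rw [he] at this
      exact absurd hq2 (not_lt.2 this.le)
  rw [key]
  refine (measurableSet_hits_closed hC).inter ?_
  refine (MeasurableSet.iUnion fun q => ?_).compl
  exact ((isOpen_subsets ((hf.isOpen_preimage _).union hC.isOpen_compl)).measurableSet).inter
    ((isOpen_subsets (hf.isOpen_preimage _)).measurableSet).compl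

variable [SecondCountableTopology X]

theorem measurableSet_S_hits_open {f : X → ℝ} (hf : UpperSemicontinuous f)
    {U : Set X} (hU : IsOpen U) :
    MeasurableSet[borel (NonemptyCompacts X)]
      {K : NonemptyCompacts X | (S f K ∩ U).Nonempty} := by
  borelize (NonemptyCompacts X)
  obtain ⟨D, hDcount, hDdense⟩ := TopologicalSpace.exists_countable_dense X
  have key : {K : NonemptyCompacts X | (S f K ∩ U).Nonempty} =
      ⋃ p ∈ {p : X × ℚ | p.1 ∈ D ∧ Metric.closedBall p.1 (p.2 : ℝ) ⊆ U},
        {K : NonemptyCompacts X | (S f K ∩ Metric.closedBall p.1 (p.2 : ℝ)).Nonempty} := by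
    ext K
    simp only [mem_iUnion, mem_setOf_eq]
    constructor
    · rintro ⟨x, hxS, hxU⟩
      obtain ⟨ε, εpos, hε⟩ := Metric.isOpen_iff.1 hU x hxU
      obtain ⟨d, hdD, hdd⟩ : ∃ d ∈ D, dist d x < ε / 4 := by
        obtain ⟨d, hd1, hd2⟩ := Metric.dense_iff.1 hDdense x (ε / 4) (by linarith)
        exact ⟨d, hd2, Metric.mem_ball.1 hd1⟩
      obtain ⟨q, hq1, hq2⟩ := exists_rat_btwn (show ε / 4 < ε / 2 by linarith)
      refine ⟨(d, q), ⟨hdD, ?_⟩, x, hxS, ?_⟩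
      · intro y hy
        apply hε
        rw [Metric.mem_closedBall] at hy
        rw [Metric.mem_ball]
        have : dist y x ≤ dist y d + dist d x := dist_triangle _ _ _
        linarith
      · rw [Metric.mem_closedBall, dist_comm]
        linarith
    · rintro ⟨p, ⟨_, hsub⟩, x, hxS, hxb⟩
      exact ⟨x, hxS, hsub hxb⟩
  rw [key]
  refine MeasurableSet.biUnion ((hDcount.prod Set.countable_univ).mono ?_) fun p _ => ?_
  · rintro ⟨d, q⟩ ⟨hd, _⟩
    exact ⟨hd, trivial⟩
  · exact measurableSet_S_hits_closed hf Metric.isClosed_closedBall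

omit [SecondCountableTopology X] in
theorem measurableSet_S_subsets {f : X → ℝ} (hf : UpperSemicontinuous f)
    {V : Set X} (hV : IsOpen V) :
    MeasurableSet[borel (NonemptyCompacts X)]
      {K : NonemptyCompacts X | S f K ⊆ V} := by
  borelize (NonemptyCompacts X)
  have key : {K : NonemptyCompacts X | S f K ⊆ V} =
      {K : NonemptyCompacts X | (S f K ∩ Vᶜ).Nonempty}ᶜ := by
    ext K
    simp only [mem_setOf_eq, mem_compl_iff, inter_compl_nonempty_iff, not_not]
  rw [key]
  exact (measurableSet_S_hits_closed hf hV.isClosed_compl).compl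


end MeasurableSupArgmaxAux

open MeasurableSupArgmaxAux

/-- For an upper semicontinuous `f : X → ℝ` on a separable metric space, the map
`K ↦ sup_{x∈K} f(x)` on the space `comp(X)` of nonempty compact subsets of `X` with the
Hausdorff metric is Borel measurable, and so is the map sending `K` to its (compact, nonempty)
set of maximizers of `f`. -/
theorem measurable_sup_and_argmax {X : Type*} [MetricSpace X] [SeparableSpace X]
    (f : X → ℝ) (hf : UpperSemicontinuous f) :
    @Measurable (NonemptyCompacts X) ℝ (borel _) _
        (fun K => sSup (f '' (K : Set X))) ∧
      ∃ F : NonemptyCompacts X → NonemptyCompacts X,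
        @Measurable (NonemptyCompacts X) (NonemptyCompacts X) (borel _) (borel _) F ∧
        ∀ K : NonemptyCompacts X,
          (F K : Set X) = {x ∈ (K : Set X) | f x = sSup (f '' (K : Set X))} := by
  haveI : SecondCountableTopology X := UniformSpace.secondCountable_of_separable X
  constructor
  · letI : MeasurableSpace (NonemptyCompacts X) := borel _
    haveI : BorelSpace (NonemptyCompacts X) := ⟨rfl⟩
    refine measurable_of_Iio fun b => ?_
    have hpre : (fun K : NonemptyCompacts X => sSup (f '' (K : Set X))) ⁻¹' (Iio b)
        = {K : NonemptyCompacts X | (K : Set X) ⊆ f ⁻¹' (Iio b)} := by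
      ext K
      simp only [mem_preimage, mem_Iio, mem_setOf_eq]
      constructor
      · intro h x hx
        exact lt_of_le_of_lt (le_sup hf K hx) h
      · intro h
        obtain ⟨x₀, hx₀, he, _⟩ := usc_isGreatest hf K.isCompact K.nonempty
        rw [← he]
        exact h hx₀
    rw [hpre]
    exact (isOpen_subsets (hf.isOpen_preimage b)).measurableSet
  · refine ⟨fun K => ⟨⟨S f K, S_isCompact hf K⟩, S_nonempty hf K⟩, ?_, fun K => rfl⟩
    letI : MeasurableSpace (NonemptyCompacts X) := borel _
    exact measurable_of_subsets_hits _
      (fun V hV => measurableSet_S_subsets hf hV)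
      (fun U hU => measurableSet_S_hits_open hf hU)
end

section
/- Let Y be a metric space, X a separable metric space, and y ↦ K_y a map from Y to comp(X) such that: whenever y_n → y in Y and x_n ∈ K_{y_n}, the sequence (x_n) has a limit point x belonging to K_y. Then y ↦ K_y is Borel measurable from Y to (comp(X), d_H). -/
open TopologicalSpace Filter Metric Set

section aux

variable {Y X : Type*} [MetricSpace Y] [MetricSpace X]

lemma aux_lsc (K : Y → NonemptyCompacts X)
    (h : ∀ (y : ℕ → Y) (y₀ : Y) (x : ℕ → X),
      Tendsto y atTop (nhds y₀) → (∀ n, x n ∈ (K (y n) : Set X)) →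
      ∃ x₀ ∈ (K y₀ : Set X), MapClusterPt x₀ atTop x) (c : X) :
    LowerSemicontinuous fun y => infDist c (K y : Set X) := by
  intro y₀ L hL
  by_contra hcon
  rw [Filter.not_eventually] at hcon
  obtain ⟨y, hy_t, hy⟩ := exists_seq_forall_of_frequently hcon
  push_neg at hy
  have hx : ∀ n, ∃ x ∈ (K (y n) : Set X), infDist c (K (y n) : Set X) = dist c x :=
    fun n => (K (y n)).isCompact.exists_infDist_eq_dist (K (y n)).nonempty c
  choose x hxm hxd using hx
  obtain ⟨x₀, hx₀, hcl⟩ := h y y₀ x hy_t hxm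
  have h1 : dist c x₀ ≤ L := by
    refine le_of_forall_pos_le_add fun δ hδ => ?_
    obtain ⟨n, hn⟩ := (mapClusterPt_iff_frequently.1 hcl (ball x₀ δ) (ball_mem_nhds _ hδ)).exists
    calc dist c x₀ ≤ dist c (x n) + dist (x n) x₀ := dist_triangle _ _ _
      _ ≤ L + δ := add_le_add (by rw [← hxd n]; exact hy n) (mem_ball.1 hn).le
  exact absurd ((infDist_le_dist_of_mem hx₀).trans h1) (not_le.2 hL)

lemma aux_usc (K : Y → NonemptyCompacts X)
    (h : ∀ (y : ℕ → Y) (y₀ : Y) (x : ℕ → X),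
      Tendsto y atTop (nhds y₀) → (∀ n, x n ∈ (K (y n) : Set X)) →
      ∃ x₀ ∈ (K y₀ : Set X), MapClusterPt x₀ atTop x) (C : Set X) :
    UpperSemicontinuous fun y => sSup ((fun x => infDist x C) '' (K y : Set X)) := by
  intro y₀ L hL
  by_contra hcon
  rw [Filter.not_eventually] at hcon
  obtain ⟨y, hy_t, hy⟩ := exists_seq_forall_of_frequently hcon
  push_neg at hy
  have hx : ∀ n, ∃ x ∈ (K (y n) : Set X), ∀ z ∈ (K (y n) : Set X), infDist z C ≤ infDist x C := by
    intro n
    obtain ⟨x, hxm, hmax⟩ := (K (y n)).isCompact.exists_isMaxOn (K (y n)).nonempty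
      (continuous_infDist_pt C).continuousOn
    exact ⟨x, hxm, fun z hz => hmax hz⟩
  choose x hxm hmax using hx
  have hxL : ∀ n, L ≤ infDist (x n) C := by
    intro n
    refine (hy n).trans (csSup_le ((K (y n)).nonempty.image _) ?_)
    rintro - ⟨z, hz, rfl⟩
    exact hmax n z hz
  obtain ⟨x₀, hx₀, hcl⟩ := h y y₀ x hy_t hxm
  have h1 : L ≤ infDist x₀ C := by
    refine le_of_forall_pos_le_add fun δ hδ => ?_
    obtain ⟨n, hn⟩ := (mapClusterPt_iff_frequently.1 hcl (ball x₀ δ) (ball_mem_nhds _ hδ)).exists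
    calc L ≤ infDist (x n) C := hxL n
      _ ≤ infDist x₀ C + dist (x n) x₀ := infDist_le_infDist_add_dist
      _ ≤ infDist x₀ C + δ := by gcongr; exact (mem_ball.1 hn).le
  have h2 : infDist x₀ C ≤ sSup ((fun x => infDist x C) '' (K y₀ : Set X)) :=
    le_csSup ((K y₀).isCompact.image (continuous_infDist_pt C)).bddAbove ⟨x₀, hx₀, rfl⟩
  exact absurd (h1.trans h2) (not_le.2 hL)

end aux

/-- Let `y ↦ K_y` map a metric space `Y` to the nonempty compact subsets of a separable metric
space `X` (with the Hausdorff metric). If whenever `y_n → y` and `x_n ∈ K_{y_n}` the sequence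
`(x_n)` has a limit point belonging to `K_y`, then `y ↦ K_y` is Borel measurable. -/
theorem measurable_of_limit_points {Y X : Type*} [MetricSpace Y] [MetricSpace X]
    [SeparableSpace X]
    (K : Y → NonemptyCompacts X)
    (h : ∀ (y : ℕ → Y) (y₀ : Y) (x : ℕ → X),
      Tendsto y atTop (nhds y₀) → (∀ n, x n ∈ (K (y n) : Set X)) →
      ∃ x₀ ∈ (K y₀ : Set X), MapClusterPt x₀ atTop x) :
    @Measurable Y (NonemptyCompacts X) (borel Y) (borel _) K := by
  letI : MeasurableSpace Y := borel Y
  haveI : BorelSpace Y := ⟨rfl⟩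
  letI : MeasurableSpace (NonemptyCompacts X) := borel _
  haveI : BorelSpace (NonemptyCompacts X) := ⟨rfl⟩
  haveI : SecondCountableTopology X := UniformSpace.secondCountable_of_separable X
  have key : ∀ C : NonemptyCompacts X, Measurable fun y => dist (K y) C := by
    intro C
    obtain ⟨D₀, D₀c, D₀d⟩ := exists_countable_dense ↥(C : Set X)
    haveI : Countable ↥D₀ := D₀c.to_subtype
    haveI : Nonempty ↥(C : Set X) := C.nonempty.to_subtype
    haveI : Nonempty ↥D₀ := D₀d.nonempty.to_subtype
    set A : Y → ℝ := fun y => sSup ((fun x => infDist x (C : Set X)) '' (K y : Set X)) with hA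
    set B : Y → ℝ := fun y => ⨆ d : D₀, infDist ((d : ↥(C : Set X)) : X) (K y : Set X) with hB
    have hAm : Measurable A := (aux_usc K h (C : Set X)).measurable
    have hBm : Measurable B :=
      Measurable.iSup fun d => (aux_lsc K h ((d : ↥(C : Set X)) : X)).measurable
    have heq : ∀ y, dist (K y) C = max (A y) (B y) := by
      intro y
      rw [NonemptyCompacts.dist_eq]
      have hfin : EMetric.hausdorffEdist (K y : Set X) (C : Set X) ≠ ⊤ :=
        hausdorffEdist_ne_top_of_nonempty_of_bounded (K y).nonempty C.nonempty
          (K y).isCompact.isBounded C.isCompact.isBounded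
      have hfin' : EMetric.hausdorffEdist (C : Set X) (K y : Set X) ≠ ⊤ := by
        rw [EMetric.hausdorffEdist, Metric.hausdorffEDist_comm]; exact hfin
      have hBdd : BddAbove (range fun d : D₀ =>
          infDist ((d : ↥(C : Set X)) : X) (K y : Set X)) := by
        refine ⟨hausdorffDist (C : Set X) (K y : Set X), ?_⟩
        rintro - ⟨d, rfl⟩
        exact infDist_le_hausdorffDist_of_mem (d : ↥(C : Set X)).2 hfin'
      have hBle : B y ≤ hausdorffDist (K y : Set X) (C : Set X) := by
        refine ciSup_le fun d => ?_
        rw [hausdorffDist_comm]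
        exact infDist_le_hausdorffDist_of_mem (d : ↥(C : Set X)).2 hfin'
      have hAle : A y ≤ hausdorffDist (K y : Set X) (C : Set X) := by
        refine csSup_le ((K y).nonempty.image _) ?_
        rintro - ⟨z, hz, rfl⟩
        exact infDist_le_hausdorffDist_of_mem hz hfin
      have hB0 : (0 : ℝ) ≤ B y :=
        le_trans infDist_nonneg (le_ciSup hBdd (Classical.arbitrary _))
      refine le_antisymm ?_ (max_le hAle hBle)
      refine le_of_forall_pos_le_add fun ε hε => ?_
      refine hausdorffDist_le_of_infDist (by positivity) (fun z hz => ?_) (fun c hc => ?_)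
      · have h1 : infDist z (C : Set X) ≤ A y :=
          le_csSup ((K y).isCompact.image (continuous_infDist_pt _)).bddAbove ⟨z, hz, rfl⟩
        have h2 : A y ≤ max (A y) (B y) := le_max_left _ _
        linarith
      · obtain ⟨d, hdm, hdlt⟩ := D₀d.exists_dist_lt (⟨c, hc⟩ : ↥(C : Set X)) hε
        have h1 : infDist c (K y : Set X) ≤
            infDist ((d : ↥(C : Set X)) : X) (K y : Set X) + dist c ((d : ↥(C : Set X)) : X) :=
          infDist_le_infDist_add_dist
        have h2 : infDist ((d : ↥(C : Set X)) : X) (K y : Set X) ≤ B y :=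
          le_ciSup hBdd (⟨d, hdm⟩ : D₀)
        have h3 : dist c ((d : ↥(C : Set X)) : X) ≤ ε := by
          have := hdlt.le
          rw [Subtype.dist_eq] at this
          exact this
        have h4 : B y ≤ max (A y) (B y) := le_max_right _ _
        linarith
    have : (fun y => dist (K y) C) = fun y => max (A y) (B y) := funext heq
    rw [this]
    exact hAm.max hBm
  obtain ⟨S, Sc, Sd⟩ := exists_countable_dense (NonemptyCompacts X)
  haveI : Countable ↥S := Sc.to_subtype
  refine measurable_of_isOpen fun U hU => ?_
  have hUeq : K ⁻¹' U = ⋃ (p : ↥S × ℚ) (_ : Metric.ball (p.1 : NonemptyCompacts X) (p.2 : ℝ) ⊆ U),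
      {y | dist (K y) (p.1 : NonemptyCompacts X) < (p.2 : ℝ)} := by
    ext y
    simp only [mem_preimage, mem_iUnion, mem_setOf_eq]
    constructor
    · intro hy
      obtain ⟨ε, hε, hball⟩ := Metric.isOpen_iff.1 hU _ hy
      obtain ⟨q, hq0, hqε⟩ := exists_rat_btwn (show (0 : ℝ) < ε / 2 by linarith)
      obtain ⟨c, hcS, hclt⟩ := Sd.exists_dist_lt (K y) hq0
      refine ⟨(⟨c, hcS⟩, q), fun T hT => hball ?_, hclt⟩
      have h1 : dist T c < (q : ℝ) := mem_ball.1 hT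
      have h2 : dist c (K y) < (q : ℝ) := by rwa [dist_comm]
      have : dist T (K y) < ε :=
        lt_of_le_of_lt (dist_triangle T c (K y)) (by linarith)
      exact mem_ball.2 this
    · rintro ⟨p, hsub, hlt⟩
      exact hsub (mem_ball.2 hlt)
  rw [hUeq]
  exact MeasurableSet.iUnion fun p => MeasurableSet.iUnion fun _ =>
    measurableSet_lt (key _) measurable_const
end

section
/- Let (E, F) be a measurable space, X a separable metric space, and q ↦ K_q a measurable map from E to the space comp(X) of nonempty compact subsets of X with the Hausdorff metric. Then there exists an F/Borel(X)-measurable map h : E → X with h(q) ∈ K_q for every q ∈ E. -/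
open TopologicalSpace Metric Filter
namespace MeasSelAux
open scoped Classical
variable {E X : Type*} [MeasurableSpace E] [MetricSpace X]

set_option linter.unusedSectionVars false

noncomputable def sel (K : E → NonemptyCompacts X) (x : ℕ → X)
    (H0 : ∀ q, ∃ n, infDist (x n) (K q : Set X) < 1)
    (HS : ∀ (k prev : ℕ) (q : E), ∃ n, infDist (x n) (K q : Set X) < (1/2:ℝ)^(k+1) ∧
      (infDist (x prev) (K q : Set X) < (1/2:ℝ)^k →
        dist (x n) (x prev) < (1/2:ℝ)^k + (1/2:ℝ)^(k+1))) :
    ℕ → E → ℕ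
  | 0 => fun q => Nat.find (H0 q)
  | (k+1) => fun q => Nat.find (HS k (sel K x H0 HS k q) q)

variable (K : E → NonemptyCompacts X) (x : ℕ → X)
    (H0 : ∀ q, ∃ n, infDist (x n) (K q : Set X) < 1)
    (HS : ∀ (k prev : ℕ) (q : E), ∃ n, infDist (x n) (K q : Set X) < (1/2:ℝ)^(k+1) ∧
      (infDist (x prev) (K q : Set X) < (1/2:ℝ)^k →
        dist (x n) (x prev) < (1/2:ℝ)^k + (1/2:ℝ)^(k+1)))

theorem sel_infDist (k : ℕ) (q : E) :
    infDist (x (sel K x H0 HS k q)) (K q : Set X) < (1/2:ℝ)^k := by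
  cases k with
  | zero => simpa [sel] using Nat.find_spec (H0 q)
  | succ k => exact (Nat.find_spec (HS k (sel K x H0 HS k q) q)).1

theorem sel_dist (k : ℕ) (q : E) :
    dist (x (sel K x H0 HS (k+1) q)) (x (sel K x H0 HS k q))
      < (1/2:ℝ)^k + (1/2:ℝ)^(k+1) :=
  (Nat.find_spec (HS k (sel K x H0 HS k q) q)).2 (sel_infDist K x H0 HS k q)

variable [MeasurableSpace X] [BorelSpace X]
  [MeasurableSpace (NonemptyCompacts X)] [BorelSpace (NonemptyCompacts X)]
  (hK : Measurable K)

include hK in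
theorem measurable_infDist_comp (y : X) : Measurable fun q => infDist y (K q : Set X) :=
  ((lipschitz_infDist_set y).continuous.measurable).comp hK

include hK in
theorem sel_measurable (k : ℕ) : Measurable (sel K x H0 HS k) := by
  induction k with
  | zero =>
    exact measurable_find H0 fun n =>
      measurableSet_lt (measurable_infDist_comp K hK (x n)) measurable_const
  | succ k ih =>
    refine measurable_find _ fun n => ?_
    have : {q | infDist (x n) (K q : Set X) < (1/2:ℝ)^(k+1) ∧
        (infDist (x (sel K x H0 HS k q)) (K q : Set X) < (1/2:ℝ)^k →
          dist (x n) (x (sel K x H0 HS k q)) < (1/2:ℝ)^k + (1/2:ℝ)^(k+1))} =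
        ⋃ m, (sel K x H0 HS k ⁻¹' {m}) ∩
          {q | infDist (x n) (K q : Set X) < (1/2:ℝ)^(k+1) ∧
            (infDist (x m) (K q : Set X) < (1/2:ℝ)^k →
              dist (x n) (x m) < (1/2:ℝ)^k + (1/2:ℝ)^(k+1))} := by
      ext q
      simp only [Set.mem_setOf_eq, Set.mem_iUnion, Set.mem_inter_iff, Set.mem_preimage,
        Set.mem_singleton_iff]
      constructor
      · intro h; exact ⟨sel K x H0 HS k q, rfl, h⟩
      · rintro ⟨m, rfl, h⟩; exact h
    rw [this]
    refine MeasurableSet.iUnion fun m => (ih (measurableSet_singleton m)).inter ?_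
    refine MeasurableSet.inter
      (measurableSet_lt (measurable_infDist_comp K hK (x n)) measurable_const) ?_
    show MeasurableSet {q : E | infDist (x m) (K q : Set X) < (1/2:ℝ)^k →
        dist (x n) (x m) < (1/2:ℝ)^k + (1/2:ℝ)^(k+1)}
    have : {q : E | infDist (x m) (K q : Set X) < (1/2:ℝ)^k →
        dist (x n) (x m) < (1/2:ℝ)^k + (1/2:ℝ)^(k+1)} =
        {q : E | (1/2:ℝ)^k ≤ infDist (x m) (K q : Set X)} ∪
        {q : E | dist (x n) (x m) < (1/2:ℝ)^k + (1/2:ℝ)^(k+1)} := by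
      ext q; simp [imp_iff_not_or, not_lt]
    rw [this]
    exact (measurableSet_le measurable_const (measurable_infDist_comp K hK (x m))).union
      (MeasurableSet.const _)

end MeasSelAux

open Metric Filter MeasSelAux in
open scoped Topology in
/-- Measurable selection: if `q ↦ K_q` is a measurable map from a measurable space `E` to the
nonempty compact subsets of a separable metric space `X` (with the Borel σ-algebra of the
Hausdorff metric), then there is a measurable `h : E → X` with `h q ∈ K_q` for every `q`. -/
theorem exists_measurable_selection {E X : Type*} [MeasurableSpace E] [MetricSpace X]
    [SeparableSpace X]
    (K : E → NonemptyCompacts X)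
    (hK : @Measurable E (NonemptyCompacts X) _ (borel _) K) :
    ∃ h : E → X, @Measurable E X _ (borel X) h ∧ ∀ q, h q ∈ (K q : Set X) := by
  letI : MeasurableSpace X := borel X
  haveI : BorelSpace X := ⟨rfl⟩
  letI : MeasurableSpace (NonemptyCompacts X) := borel _
  haveI : BorelSpace (NonemptyCompacts X) := ⟨rfl⟩
  rcases isEmpty_or_nonempty E with hE | hE
  · exact ⟨fun q => isEmptyElim q, measurable_of_empty _, fun q => isEmptyElim q⟩
  haveI : Nonempty X := ⟨(K (Classical.arbitrary E)).nonempty.some⟩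
  obtain ⟨x, hx⟩ := TopologicalSpace.exists_dense_seq X
  have H0 : ∀ q, ∃ n, infDist (x n) (K q : Set X) < 1 := by
    intro q
    obtain ⟨y, hy⟩ := (K q).nonempty
    obtain ⟨n, hn⟩ := hx.exists_dist_lt y one_pos
    exact ⟨n, lt_of_le_of_lt (infDist_le_dist_of_mem hy) (by rwa [dist_comm])⟩
  have hpow : ∀ k : ℕ, (0:ℝ) < (1/2:ℝ)^k := fun k => pow_pos (by norm_num) k
  have HS : ∀ (k prev : ℕ) (q : E), ∃ n, infDist (x n) (K q : Set X) < (1/2:ℝ)^(k+1) ∧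
      (infDist (x prev) (K q : Set X) < (1/2:ℝ)^k →
        dist (x n) (x prev) < (1/2:ℝ)^k + (1/2:ℝ)^(k+1)) := by
    intro k prev q
    by_cases hp : infDist (x prev) (K q : Set X) < (1/2:ℝ)^k
    · obtain ⟨y, hyK, hyd⟩ := (infDist_lt_iff (K q).nonempty).1 hp
      obtain ⟨n, hn⟩ := hx.exists_dist_lt y (hpow (k+1))
      refine ⟨n, lt_of_le_of_lt (infDist_le_dist_of_mem hyK) (by rwa [dist_comm]), fun _ => ?_⟩
      calc dist (x n) (x prev) ≤ dist (x n) y + dist y (x prev) := dist_triangle _ _ _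
        _ < (1/2:ℝ)^(k+1) + (1/2:ℝ)^k := by
            rw [dist_comm (x n) y, dist_comm y (x prev)]; exact add_lt_add hn hyd
        _ = (1/2:ℝ)^k + (1/2:ℝ)^(k+1) := add_comm _ _
    · obtain ⟨y, hyK⟩ := (K q).nonempty
      obtain ⟨n, hn⟩ := hx.exists_dist_lt y (hpow (k+1))
      exact ⟨n, lt_of_le_of_lt (infDist_le_dist_of_mem hyK) (by rwa [dist_comm]),
        fun h => absurd h hp⟩
  set f : ℕ → E → X := fun k q => x (sel K x H0 HS k q) with hf_def
  have hf : ∀ k, Measurable (f k) :=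
    fun k => measurable_from_top.comp (sel_measurable K x H0 HS hK k)
  have hconv : ∀ q, ∃ z, z ∈ (K q : Set X) ∧ Tendsto (fun k => f k q) atTop (𝓝 z) := by
    intro q
    have hy : ∀ k, ∃ y ∈ (K q : Set X), dist (f k q) y < (1/2:ℝ)^k :=
      fun k => (infDist_lt_iff (K q).nonempty).1 (sel_infDist K x H0 HS k q)
    choose y hyK hyd using hy
    have hcauchy : CauchySeq y := by
      refine cauchySeq_of_le_geometric (1/2) 4 (by norm_num) fun k => ?_
    -- dist (y k) (y (k+1)) ≤ 4 * (1/2)^k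
      have h1 := hyd k
      have h2 := sel_dist K x H0 HS k q
      have h3 := hyd (k+1)
      have h4 : dist (y k) (y (k+1)) ≤
          dist (y k) (f k q) + dist (f k q) (f (k+1) q) + dist (f (k+1) q) (y (k+1)) :=
        dist_triangle4 _ _ _ _
      have h5 : (1/2:ℝ)^(k+1) ≤ (1/2:ℝ)^k := by
        rw [pow_succ]; nlinarith [hpow k]
      rw [dist_comm (y k) (f k q), dist_comm (f k q) (f (k+1) q)] at h4
      nlinarith [h1, h2, h3, h4, h5]
    obtain ⟨z, hzK, hz⟩ := cauchySeq_tendsto_of_isComplete (K q).isCompact.isComplete hyK hcauchy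
    refine ⟨z, hzK, hz.congr_dist ?_⟩
    refine squeeze_zero (fun k => dist_nonneg) (fun k => ?_)
      (tendsto_pow_atTop_nhds_zero_of_lt_one (r := (1/2:ℝ)) (by norm_num) (by norm_num))
    rw [dist_comm]; exact le_of_lt (hyd k)
  choose h hmem htend using hconv
  exact ⟨h, measurable_of_tendsto_metrizable hf (tendsto_pi_nhds.2 htend), hmem⟩
end
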